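/- Let $\omega$ be a weight function and $\overline{C} > 0$. Then there exists $C < \infty$ such that for all real $y \ge 2$, $\sum_{n \ge y} e^{-\overline{C}\omega(\sqrt{n})} \le C e^{-\overline{C}\omega(\sqrt{y})/2}$. -/

import Mathlib

open MeasureTheory Real Filter Asymptotics

noncomputable def FT (f : ℝ → ℂ) (ξ : ℝ) : ℂ :=
  (((2 * Real.pi) ^ (-(1:ℝ)/2) : ℝ) : ℂ) * ∫ x : ℝ, f x * Complex.exp (-(Complex.I * ξ * x))

noncomputable def hermiteFn (n : ℕ) (x : ℝ) : ℝ :=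
  ((2 ^ n * n.factorial * Real.sqrt Real.pi : ℝ) ^ (-(1:ℝ)/2)) *
    ((-1 : ℝ) ^ n * Real.exp (x ^ 2) * iteratedDeriv n (fun t => Real.exp (-t ^ 2)) x) *
    Real.exp (-x ^ 2 / 2)

def IsWeight (ω : ℝ → ℝ) : Prop :=
  Continuous ω ∧ Monotone ω ∧ (∀ x, 0 ≤ ω x) ∧
  ConvexOn ℝ Set.univ (fun t => ω (Real.exp t)) ∧
  ((fun t => Real.log t) =o[atTop] ω) ∧
  (∃ C : ℝ, ∀ᶠ t in atTop, ω (2 * t) ≤ C * ω t) ∧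
  Filter.limsup (fun t => ω t / t ^ 2) atTop ≤ 1 / 2

noncomputable def omegaNorm (ω : ℝ → ℝ) (f : ℝ → ℂ) : ℝ :=
  (⨆ x : ℝ, ‖f x‖ * Real.exp (ω |x|)) + (⨆ ξ : ℝ, ‖FT f ξ‖ * Real.exp (ω |ξ|))

def MemSomega (ω : ℝ → ℝ) (f : ℝ → ℂ) : Prop :=
  MemLp f 2 volume ∧
  (∃ C : ℝ, ∀ x, ‖f x‖ ≤ C * Real.exp (-ω |x|)) ∧
  (∃ C : ℝ, ∀ ξ, ‖FT f ξ‖ ≤ C * Real.exp (-ω |ξ|))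

noncomputable def OmegaStar (ω : ℝ → ℝ) (ν : ℝ) : ℝ :=
  ⨆ t : ℝ, ν * t - ω (Real.exp t)

noncomputable def wigner (f : ℝ → ℂ) (q p : ℝ) : ℂ :=
  ((1 / (2 * Real.pi) : ℝ) : ℂ) * ∫ x : ℝ,
    Complex.exp (Complex.I * p * x) * f (q - x / 2) * (starRingEnd ℂ) (f (q + x / 2))

noncomputable def laguerre (n α : ℕ) (x : ℝ) : ℝ :=
  (n.factorial : ℝ)⁻¹ * Real.exp x * x ^ (-(α : ℤ)) *
    iteratedDeriv n (fun t => Real.exp (-t) * t ^ (n + α)) x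

noncomputable def specialHermite (m n : ℕ) (q p : ℝ) : ℂ :=
  ((1 / (2 * Real.pi) : ℝ) : ℂ) * ∫ x : ℝ,
    Complex.exp (Complex.I * p * x) * (hermiteFn m (q - x / 2) : ℂ) * (hermiteFn n (q + x / 2) : ℂ)

noncomputable def lmn (m n : ℕ) (r : ℝ) : ℝ :=
  (2 : ℝ) ^ (((m : ℝ) - n) / 2) / Real.pi * Real.sqrt ((n.factorial : ℝ) / m.factorial) *
    Real.exp (-r ^ 2) * r ^ (m - n) * |laguerre n (m - n) (2 * r ^ 2)|

theorem stmt11 (ω : ℝ → ℝ) (hc : Continuous ω) (hm : Monotone ω) (hpos : ∀ x, 0 ≤ ω x)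
    (hconv : ConvexOn ℝ Set.univ fun t => ω (Real.exp t))
    (hlog : (fun t => Real.log t) =o[atTop] ω)
    (hdoub : ∃ Cd : ℝ, ∀ᶠ t in atTop, ω (2 * t) ≤ Cd * ω t)
    (Cb : ℝ) (hCb : 0 < Cb) :
    ∃ C : ℝ, ∀ y : ℝ, 2 ≤ y →
      ∑' n : {n : ℕ // y ≤ (n : ℝ)}, Real.exp (-(Cb * ω (Real.sqrt (n.1 : ℝ)))) ≤
        C * Real.exp (-(Cb * ω (Real.sqrt y)) / 2) := by
  set g : ℕ → ℝ := fun n => Real.exp (-(Cb * ω (Real.sqrt n)) / 2) with hg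
  have hgpos : ∀ n, 0 ≤ g n := fun n => (Real.exp_pos _).le
  -- summability of g
  have hε : (0:ℝ) < Cb/8 := by positivity
  obtain ⟨T, hT⟩ := eventually_atTop.1 (hlog.def hε)
  have hgsum : Summable g := by
    apply summable_of_isBigO_nat (g := fun n : ℕ => ((n:ℝ)^2)⁻¹)
    · exact ((Real.summable_one_div_nat_pow (p := 2)).2 (by norm_num)).congr (fun n => by
        rw [one_div])
    · rw [Asymptotics.isBigO_iff]
      refine ⟨1, ?_⟩
      rw [eventually_atTop]
      refine ⟨⌈(max T 1)^2⌉₊ + 2, fun n hn => ?_⟩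
      have hn2 : (2:ℕ) ≤ n := le_trans (Nat.le_add_left 2 _) hn
      have hnR : (max T 1)^2 ≤ (n:ℝ) := by
        calc (max T 1)^2 ≤ (⌈(max T 1)^2⌉₊ : ℝ) := Nat.le_ceil _
        _ ≤ (n:ℝ) := by exact_mod_cast le_trans (Nat.le_add_right _ 2) hn
      have hsq : max T 1 ≤ Real.sqrt n := by
        rw [show max T 1 = Real.sqrt ((max T 1)^2) from
          (Real.sqrt_sq (le_trans zero_le_one (le_max_right T 1))).symm]
        exact Real.sqrt_le_sqrt hnR
      have hlogb := hT (Real.sqrt n) (le_trans (le_max_left T 1) hsq)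
      have h1 : (1:ℝ) ≤ Real.sqrt n := le_trans (le_max_right T 1) hsq
      have hlog2 : Real.log (Real.sqrt n) ≤ (Cb/8) * ω (Real.sqrt n) := by
        have := hlogb
        rw [Real.norm_eq_abs, Real.norm_eq_abs, abs_of_nonneg (Real.log_nonneg h1),
          abs_of_nonneg (hpos _)] at this
        exact this
      have hnpos : (0:ℝ) < n := by positivity
      have hlogn : Real.log (Real.sqrt n) = Real.log n / 2 := Real.log_sqrt (le_of_lt hnpos)
      have key : 2 * Real.log n ≤ Cb * ω (Real.sqrt n) / 2 := by
        rw [hlogn] at hlog2; nlinarith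
      have hgle : g n ≤ ((n:ℝ)^2)⁻¹ := by
        rw [hg]
        have h2 : Real.exp (-(Cb * ω (Real.sqrt n)) / 2) ≤ Real.exp (-(2 * Real.log n)) := by
          apply Real.exp_le_exp.2; linarith
        refine le_trans h2 (le_of_eq ?_)
        rw [Real.exp_neg]
        congr 1
        rw [show (2:ℝ) * Real.log n = Real.log (((n:ℝ))^2) by
          rw [Real.log_pow]; push_cast; ring]
        exact Real.exp_log (by positivity)
      calc ‖g n‖ = g n := Real.norm_of_nonneg (hgpos n)
        _ ≤ ((n:ℝ)^2)⁻¹ := hgle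
        _ ≤ 1 * ‖((n:ℝ)^2)⁻¹‖ := by
            rw [one_mul, Real.norm_of_nonneg (by positivity)]
  refine ⟨∑' n : ℕ, g n, fun y hy => ?_⟩
  have hy0 : (0:ℝ) ≤ y := by linarith
  set E := Real.exp (-(Cb * ω (Real.sqrt y)) / 2) with hE
  have hbound : ∀ n : {n : ℕ // y ≤ (n : ℝ)},
      Real.exp (-(Cb * ω (Real.sqrt (n.1 : ℝ)))) ≤ E * g n.1 := by
    rintro ⟨n, hn⟩
    have hωle : ω (Real.sqrt y) ≤ ω (Real.sqrt n) := hm (Real.sqrt_le_sqrt hn)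
    rw [hE, hg, ← Real.exp_add]
    apply Real.exp_le_exp.2
    have : Cb * ω (Real.sqrt y) ≤ Cb * ω (Real.sqrt n) := by nlinarith
    linarith
  have hsumRHS : Summable (fun n : {n : ℕ // y ≤ (n : ℝ)} => E * g n.1) :=
    ((hgsum.subtype _).mul_left E : _)
  have hsumLHS : Summable (fun n : {n : ℕ // y ≤ (n : ℝ)} =>
      Real.exp (-(Cb * ω (Real.sqrt (n.1 : ℝ))))) :=
    Summable.of_nonneg_of_le (fun n => (Real.exp_pos _).le) hbound hsumRHS
  calc ∑' n : {n : ℕ // y ≤ (n : ℝ)}, Real.exp (-(Cb * ω (Real.sqrt (n.1 : ℝ))))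
      ≤ ∑' n : {n : ℕ // y ≤ (n : ℝ)}, E * g n.1 := Summable.tsum_le_tsum hbound hsumLHS hsumRHS
    _ = E * ∑' n : {n : ℕ // y ≤ (n : ℝ)}, g n.1 := tsum_mul_left
    _ ≤ E * ∑' n : ℕ, g n := by
        apply mul_le_mul_of_nonneg_left _ (Real.exp_pos _).le
        exact Summable.tsum_subtype_le g _ hgpos hgsum
    _ = (∑' n : ℕ, g n) * E := mul_comm _ _
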